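/- Let V be a finite-dimensional real normed vector space and let C ⊆ V be a closed convex cone that is salient (C ∩ (−C) = {0}) and full-dimensional (has nonempty interior). Suppose C is the closure of the convex cone generated by a set S ⊆ V. If α ∈ C spans an extremal ray of C, then there exists a sequence (c_j) of elements of S and positive real numbers r_j such that α = lim_{j→∞} r_j · c_j. -/

import Mathlib

open Filter Topology

private lemma sum_dite_extend {ι κ M : Type*} [Fintype ι] [Fintype κ] [DecidableEq κ] [AddCommMonoid M]
    (e : ι ↪ κ) (u : ι → M) :
    ∑ j : κ, (if h : ∃ i, e i = j then u h.choose else 0) = ∑ i, u i := by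
  classical
  rw [show (Finset.univ : Finset κ) = Finset.univ.image e ∪ (Finset.univ.image e)ᶜ by
    simp, Finset.sum_union disjoint_compl_right]
  have h2 : ∑ j ∈ (Finset.univ.image e)ᶜ,
      (if h : ∃ i, e i = j then u h.choose else 0) = 0 := by
    apply Finset.sum_eq_zero
    intro j hj
    rw [dif_neg]
    rintro ⟨i, hi⟩
    exact (Finset.mem_compl.1 hj) (Finset.mem_image.2 ⟨i, Finset.mem_univ _, hi⟩)
  rw [h2, add_zero, Finset.sum_image (fun i _ j _ h => e.injective h)]
  apply Finset.sum_congr rfl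
  intro i _
  have hex : ∃ i', e i' = e i := ⟨i, rfl⟩
  rw [dif_pos hex]
  congr 1
  exact e.injective hex.choose_spec

private lemma isCompact_convexHull_fd {V : Type*} [NormedAddCommGroup V] [NormedSpace ℝ V]
    [FiniteDimensional ℝ V] {K : Set V} (hK : IsCompact K) : IsCompact (convexHull ℝ K) := by
  classical
  rcases K.eq_empty_or_nonempty with rfl | ⟨k₀, hk₀⟩
  · simpa using isCompact_empty
  set n := Module.finrank ℝ V + 1 with hn
  have hcont : Continuous fun p : (Fin n → ℝ) × (Fin n → V) => ∑ i, p.1 i • p.2 i :=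
    continuous_finset_sum _ fun i _ =>
      ((continuous_apply i).comp continuous_fst).smul ((continuous_apply i).comp continuous_snd)
  have hcomp : IsCompact (stdSimplex ℝ (Fin n) ×ˢ Set.univ.pi fun _ : Fin n => K) :=
    IsCompact.prod (isCompact_stdSimplex (𝕜 := ℝ) (ι := Fin n)) (isCompact_univ_pi fun _ => hK)
  have himage : convexHull ℝ K = (fun p : (Fin n → ℝ) × (Fin n → V) => ∑ i, p.1 i • p.2 i) ''
      (stdSimplex ℝ (Fin n) ×ˢ Set.univ.pi fun _ : Fin n => K) := by
    apply Set.Subset.antisymm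
    · intro x hx
      obtain ⟨ι, hfin, z, w, hzs, hai, hw0, hw1, hwz⟩ := eq_pos_convex_span_of_mem_convexHull hx
      have hcard : Fintype.card ι ≤ n := by
        refine hai.card_le_finrank_succ.trans ?_
        exact Nat.add_le_add_right (Submodule.finrank_le _) 1
      obtain ⟨e⟩ : Nonempty (ι ↪ Fin n) :=
        Function.Embedding.nonempty_of_card_le (by simpa using hcard)
      refine ⟨(fun j => if h : ∃ i, e i = j then w h.choose else 0,
               fun j => if h : ∃ i, e i = j then z h.choose else k₀), ⟨⟨?_, ?_⟩, ?_⟩, ?_⟩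
      · intro j
        dsimp only
        split
        · exact (hw0 _).le
        · exact le_rfl
      · exact (sum_dite_extend e w).trans hw1
      · intro j _
        dsimp only
        split
        · exact hzs ⟨_, rfl⟩
        · exact hk₀
      · dsimp only
        have : ∀ j : Fin n, (if h : ∃ i, e i = j then w h.choose else 0) •
            (if h : ∃ i, e i = j then z h.choose else k₀) =
            (if h : ∃ i, e i = j then w h.choose • z h.choose else 0) := by
          intro j; split <;> simp
        rw [Finset.sum_congr rfl fun j _ => this j, sum_dite_extend e fun i => w i • z i, hwz]
    · rintro _ ⟨⟨w, z⟩, ⟨hw, hz⟩, rfl⟩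
      exact mem_convexHull_of_exists_fintype w z hw.1 hw.2 (fun i => hz i trivial) rfl
  rw [himage]
  exact hcomp.image hcont

/-- Lemma 4.1: an extremal element of a closed, salient, full-dimensional convex
cone generated (as a closed cone) by a set `S` is a limit of positive multiples
of elements of `S`. -/
theorem extremal_ray_is_limit_of_generators
    {V : Type*} [NormedAddCommGroup V] [NormedSpace ℝ V] [FiniteDimensional ℝ V]
    (C : Set V) (S : Set V)
    (hclosed : IsClosed C)
    (hadd : ∀ x ∈ C, ∀ y ∈ C, x + y ∈ C)
    (hsmul : ∀ r : ℝ, 0 < r → ∀ x ∈ C, r • x ∈ C)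
    (hsalient : C ∩ (-C) = {0})
    (hfull : (interior C).Nonempty)
    (hgen : C = closure {x : V | ∃ (n : ℕ) (f : Fin n → ℝ) (g : Fin n → V),
      (∀ i, 0 ≤ f i) ∧ (∀ i, g i ∈ S) ∧ x = ∑ i, f i • g i})
    (α : V) (hαC : α ∈ C) (hα0 : α ≠ 0)
    (hext : ∀ β ∈ C, ∀ γ ∈ C, β + γ = α →
      (∃ t : ℝ, 0 ≤ t ∧ β = t • α) ∧ (∃ t : ℝ, 0 ≤ t ∧ γ = t • α)) :
    ∃ (c : ℕ → V) (r : ℕ → ℝ), (∀ j, c j ∈ S) ∧ (∀ j, 0 < r j) ∧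
      Tendsto (fun j => r j • c j) atTop (𝓝 α) := by
  classical
  set P : Set V := {x : V | ∃ (n : ℕ) (f : Fin n → ℝ) (g : Fin n → V),
      (∀ i, 0 ≤ f i) ∧ (∀ i, g i ∈ S) ∧ x = ∑ i, f i • g i} with hP
  have h0C : (0 : V) ∈ C := by
    have : (0:V) ∈ ({0} : Set V) := rfl
    rw [← hsalient] at this; exact this.1
  have hsum : ∀ {ι : Type} (t : Finset ι) (p : ι → V), (∀ i ∈ t, p i ∈ C) →
      ∑ i ∈ t, p i ∈ C := by
    intro ι t p hp
    induction t using Finset.induction_on with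
    | empty => simpa using h0C
    | insert _ _ hnotmem ih =>
      rw [Finset.sum_insert hnotmem]
      exact hadd _ (hp _ (Finset.mem_insert_self _ _)) _
        (ih fun i hi => hp i (Finset.mem_insert_of_mem hi))
  have hPC : P ⊆ C := hgen ▸ subset_closure
  have hSC : ∀ s ∈ S, s ∈ C := fun s hs =>
    hPC ⟨1, fun _ => 1, fun _ => s, fun _ => zero_le_one, fun _ => hs, by simp⟩
  have hsal : ∀ x, x ∈ C → -x ∈ C → x = 0 := by
    intro x h1 h2
    have : x ∈ C ∩ (-C) := ⟨h1, by simpa using h2⟩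
    rw [hsalient] at this; exact this
  have hconv : Convex ℝ C := by
    intro x hx y hy a b ha hb hab
    rcases eq_or_lt_of_le ha with rfl | ha'
    · have hb1 : b = 1 := by linarith
      simpa [hb1] using hy
    rcases eq_or_lt_of_le hb with rfl | hb'
    · have ha1 : a = 1 := by linarith
      simpa [ha1] using hx
    exact hadd _ (hsmul a ha' x hx) _ (hsmul b hb' y hy)
  -- Step 1: a uniformly positive continuous linear functional on C
  obtain ⟨L, u, hu, hL⟩ : ∃ (L : V →L[ℝ] ℝ) (u : ℝ), 0 < u ∧ ∀ x ∈ C, u * ‖x‖ ≤ L x := by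
    have hK : IsCompact (C ∩ Metric.sphere (0:V) 1) :=
      (isCompact_sphere (0:V) 1).inter_left hclosed
    set D := convexHull ℝ (C ∩ Metric.sphere (0:V) 1) with hD
    have hDcp : IsCompact D := isCompact_convexHull_fd hK
    have h0D : (0:V) ∉ D := by
      intro h0
      rw [hD, mem_convexHull_iff_exists_fintype] at h0
      obtain ⟨ι, hfin, w, z, hw0, hw1, hz, hsum0⟩ := h0
      have hex : ∃ i, 0 < w i := by
        by_contra h; push_neg at h
        have hz' : ∀ i, w i = 0 := fun i => le_antisymm (h i) (hw0 i)
        simp [hz'] at hw1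
      obtain ⟨i₀, hi₀⟩ := hex
      have hterm : ∀ i, w i • z i ∈ C := by
        intro i
        rcases eq_or_lt_of_le (hw0 i) with h | h
        · simpa [← h] using h0C
        · exact hsmul _ h _ (hz i).1
      have hrest : ∑ i ∈ Finset.univ.erase i₀, w i • z i ∈ C :=
        hsum _ _ fun i _ => hterm i
      have hneg : -(w i₀ • z i₀) ∈ C := by
        have hsplit : w i₀ • z i₀ + ∑ i ∈ Finset.univ.erase i₀, w i • z i = 0 :=
          (Finset.add_sum_erase Finset.univ (fun i => w i • z i) (Finset.mem_univ i₀)).trans hsum0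
        have : -(w i₀ • z i₀) = ∑ i ∈ Finset.univ.erase i₀, w i • z i := by
          linear_combination (norm := abel) -hsplit
        rw [this]; exact hrest
      have hz0 : w i₀ • z i₀ = 0 := hsal _ (hterm i₀) hneg
      have : z i₀ = 0 := by
        have := smul_eq_zero.1 hz0
        rcases this with h | h
        · exact absurd h hi₀.ne'
        · exact h
      have hnz : ‖z i₀‖ = 1 := by simpa using (hz i₀).2
      rw [this] at hnz; simp at hnz
    obtain ⟨L, u, h1, h2⟩ :=
      geometric_hahn_banach_point_closed (convex_convexHull ℝ _) hDcp.isClosed h0D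
    refine ⟨L, u, by simpa using h1, ?_⟩
    intro x hx
    rcases eq_or_ne x 0 with rfl | hx0
    · simp
    have hxn : 0 < ‖x‖ := norm_pos_iff.2 hx0
    have hxs : ‖x‖⁻¹ • x ∈ C ∩ Metric.sphere (0:V) 1 := by
      refine ⟨hsmul _ (by positivity) _ hx, ?_⟩
      simp [norm_smul, abs_of_pos (inv_pos.2 hxn), inv_mul_cancel₀ hxn.ne']
    have hlt := h2 _ (subset_convexHull ℝ _ hxs)
    rw [map_smul, smul_eq_mul] at hlt
    have hinv : u * ‖x‖ < L x := by
      have := (lt_div_iff₀ hxn).1 (by rw [div_eq_inv_mul]; exact hlt)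
      linarith
    exact hinv.le
  have hLpos : ∀ x ∈ C, x ≠ 0 → 0 < L x := by
    intro x hx hx0
    have hxn : 0 < ‖x‖ := norm_pos_iff.2 hx0
    exact lt_of_lt_of_le (by positivity) (hL x hx)
  have hLnonneg : ∀ x ∈ C, 0 ≤ L x := fun x hx => le_trans (by positivity) (hL x hx)
  have hLα : 0 < L α := hLpos α hαC hα0
  -- the compact base B
  set B := C ∩ {x | L x = 1} with hBdef
  have hBcl : IsClosed B := hclosed.inter (isClosed_eq L.continuous continuous_const)
  have hBconv : Convex ℝ B := hconv.inter (convex_hyperplane (L : V →ₗ[ℝ] ℝ).isLinear 1)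
  have hBcp : IsCompact B := by
    refine Metric.isCompact_of_isClosed_isBounded hBcl ?_
    rw [isBounded_iff_forall_norm_le]
    refine ⟨u⁻¹, fun x hx => ?_⟩
    have h1 := hL x hx.1
    have h2 : L x = 1 := hx.2
    have h3 : u * u⁻¹ = 1 := mul_inv_cancel₀ hu.ne'
    nlinarith [norm_nonneg x]
  have hα'B : (L α)⁻¹ • α ∈ B := by
    refine ⟨hsmul _ (inv_pos.2 hLα) _ hαC, ?_⟩
    show L ((L α)⁻¹ • α) = 1
    rw [map_smul, smul_eq_mul, inv_mul_cancel₀ hLα.ne']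
  -- extreme point
  have hα'ext : (L α)⁻¹ • α ∈ B.extremePoints ℝ := by
    rw [mem_extremePoints]
    refine ⟨hα'B, ?_⟩
    intro x₁ hx₁ x₂ hx₂ hseg
    obtain ⟨a, b, ha, hb, hab, habx⟩ := hseg
    have hβ : (L α * a) • x₁ ∈ C := hsmul _ (by positivity) _ hx₁.1
    have hγ : (L α * b) • x₂ ∈ C := hsmul _ (by positivity) _ hx₂.1
    have hsumeq : (L α * a) • x₁ + (L α * b) • x₂ = α := by
      rw [mul_smul, mul_smul, ← smul_add, habx, smul_inv_smul₀ hLα.ne']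
    obtain ⟨⟨t, ht0, htβ⟩, ⟨r, hr0, hrγ⟩⟩ := hext _ hβ _ hγ hsumeq
    have key : ∀ (c : ℝ), 0 < c → ∀ (x : V), x ∈ B → ∀ (t : ℝ),
        (L α * c) • x = t • α → x = (L α)⁻¹ • α := by
      intro c hc x hx t htx
      have hLc : L α * c ≠ 0 := by positivity
      have h1 : L ((L α * c) • x) = L α * c := by
        rw [map_smul, smul_eq_mul, hx.2, mul_one]
      have h2 : L (t • α) = t * L α := by rw [map_smul, smul_eq_mul]
      have htc : t = c := by
        rw [htx, h2] at h1
        exact mul_right_cancel₀ hLα.ne' (h1.trans (mul_comm (L α) c))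
      rw [htc] at htx
      have : x = (L α * c)⁻¹ • (c • α) := by
        rw [← htx, inv_smul_smul₀ hLc]
      rw [this, smul_smul]
      congr 1
      field_simp
    exact ⟨key a ha x₁ hx₁ t htβ, key b hb x₂ hx₂ r hrγ⟩
  -- normalized generators
  set S₁ := (fun s : V => (L s)⁻¹ • s) '' {s ∈ S | s ≠ 0} with hS₁
  have hS₁B : S₁ ⊆ B := by
    rintro _ ⟨s, ⟨hsS, hs0⟩, rfl⟩
    have hsC := hSC s hsS
    have hLs : 0 < L s := hLpos s hsC hs0
    exact ⟨hsmul _ (inv_pos.2 hLs) _ hsC, by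
      show L ((L s)⁻¹ • s) = 1
      rw [map_smul, smul_eq_mul, inv_mul_cancel₀ hLs.ne']⟩
  -- B is contained in the closed convex hull of S₁
  have hBsub : B ⊆ closure (convexHull ℝ S₁) := by
    intro x hx
    have hxP : x ∈ closure P := by rw [← hgen]; exact hx.1
    obtain ⟨y, hyP, hyx⟩ := mem_closure_iff_seq_limit.1 hxP
    have hLy : Tendsto (fun j => L (y j)) atTop (𝓝 (1:ℝ)) := by
      have := (L.continuous.tendsto x).comp hyx
      rwa [hx.2] at this
    have hev : ∀ᶠ j in atTop, 0 < L (y j) := hLy.eventually (eventually_gt_nhds one_pos)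
    have hmem : ∀ j, 0 < L (y j) → (L (y j))⁻¹ • y j ∈ convexHull ℝ S₁ := by
      intro j hj
      obtain ⟨n, f, g, hf, hg, hyeq⟩ := hyP j
      have hgC : ∀ i, g i ∈ C := fun i => hSC _ (hg i)
      have hgL : ∀ i, 0 ≤ L (g i) := fun i => hLnonneg _ (hgC i)
      have hg0 : ∀ i, ¬ 0 < L (g i) → f i • g i = 0 := by
        intro i hi
        have hLgi : L (g i) = 0 := le_antisymm (not_lt.1 hi) (hgL i)
        have h1 := hL _ (hgC i)
        rw [hLgi] at h1
        have : ‖g i‖ = 0 := le_antisymm (by nlinarith [norm_nonneg (g i)]) (norm_nonneg _)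
        rw [norm_eq_zero.1 this, smul_zero]
      set t := Finset.univ.filter (fun i : Fin n => 0 < L (g i)) with ht
      have hLyj : ∑ i ∈ t, f i * L (g i) = L (y j) := by
        rw [ht, Finset.sum_filter_of_ne, hyeq, map_sum]
        · simp [map_smul, smul_eq_mul]
        · intro i _ hne
          by_contra hi
          exact hne (by rw [show f i * L (g i) = L (f i • g i) by rw [map_smul, smul_eq_mul],
            hg0 i hi, map_zero])
      have hzmem : ∀ i ∈ t, (L (g i))⁻¹ • g i ∈ S₁ := by
        intro i hi
        have hpos : 0 < L (g i) := (Finset.mem_filter.1 hi).2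
        have hgne : g i ≠ 0 := by
          intro h; rw [h, map_zero] at hpos; exact lt_irrefl 0 hpos
        exact ⟨g i, ⟨hg i, hgne⟩, rfl⟩
      have hcm := Finset.centerMass_mem_convexHull t
        (w := fun i => f i * L (g i)) (z := fun i => (L (g i))⁻¹ • g i)
        (fun i hi => mul_nonneg (hf i) (hgL i))
        (by rw [hLyj]; exact hj) hzmem
      have heq : t.centerMass (fun i => f i * L (g i)) (fun i => (L (g i))⁻¹ • g i) =
          (L (y j))⁻¹ • y j := by
        rw [Finset.centerMass, hLyj]
        congr 1
        have hterm : ∀ i ∈ t, (f i * L (g i)) • ((L (g i))⁻¹ • g i) = f i • g i := by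
          intro i hi
          have hpos : 0 < L (g i) := (Finset.mem_filter.1 hi).2
          rw [smul_smul, mul_assoc, mul_inv_cancel₀ hpos.ne', mul_one]
        rw [Finset.sum_congr rfl hterm, ht, Finset.sum_filter_of_ne, hyeq]
        intro i _ hne
        by_contra hi
        exact hne (hg0 i hi)
      rwa [heq] at hcm
    have htend : Tendsto (fun j => (L (y j))⁻¹ • y j) atTop (𝓝 x) := by
      have hinv : Tendsto (fun j => (L (y j))⁻¹) atTop (𝓝 (1:ℝ)) := by
        simpa using hLy.inv₀ one_ne_zero
      simpa using hinv.smul hyx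
    exact mem_closure_of_tendsto htend (hev.mono fun j hj => hmem j hj)
  -- Milman-type step
  set T := closure (convexHull ℝ S₁) with hT
  have hTB : T ⊆ B := closure_minimal (convexHull_min hS₁B hBconv) hBcl
  have hTcp : IsCompact T := hBcp.of_isClosed_subset isClosed_closure hTB
  have hS₁cp : IsCompact (closure S₁) :=
    hBcp.of_isClosed_subset isClosed_closure (closure_minimal hS₁B hBcl)
  have hTeq : T = convexHull ℝ (closure S₁) := by
    apply Set.Subset.antisymm
    · exact closure_minimal (convexHull_mono subset_closure)
        (isCompact_convexHull_fd hS₁cp).isClosed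
    · refine convexHull_min ?_ ((convex_convexHull ℝ S₁).closure)
      exact closure_mono (subset_convexHull ℝ _)
  have hα'T : (L α)⁻¹ • α ∈ T := hBsub hα'B
  have hα'extT : (L α)⁻¹ • α ∈ T.extremePoints ℝ :=
    inter_extremePoints_subset_extremePoints_of_subset hTB ⟨hα'T, hα'ext⟩
  have hα'cl : (L α)⁻¹ • α ∈ closure S₁ := by
    rw [hTeq] at hα'extT
    exact extremePoints_convexHull_subset hα'extT
  -- extract the sequence
  obtain ⟨y, hyS₁, hytend⟩ := mem_closure_iff_seq_limit.1 hα'cl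
  simp only [hS₁, Set.mem_image, Set.mem_setOf_eq] at hyS₁
  choose s hs hys using hyS₁
  refine ⟨s, fun j => L α * (L (s j))⁻¹, fun j => (hs j).1, ?_, ?_⟩
  · intro j
    have hLs : 0 < L (s j) := hLpos _ (hSC _ (hs j).1) (hs j).2
    positivity
  · have : (fun j => (L α * (L (s j))⁻¹) • s j) = fun j => L α • y j := by
      funext j
      rw [mul_smul, hys j]
    rw [this]
    have := hytend.const_smul (L α)
    rwa [smul_inv_smul₀ hLα.ne'] at this
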